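/- For p = 1/2, the total variation distance between Q_{n,1/2} and the uniform distribution on [n] is exactly 1/(n+1). In particular ‖Q_{n,1/2} − U_n‖_TV = Θ(1/n). -/

import Mathlib

open Finset

/-- The Abel-type summand `C(n−1,s)(n−s)^{n−s−2}(s+1)^{s−1}`, with the powers taken in
`ℝ` with integer exponents (so e.g. `1^{-1} = 1`). -/
noncomputable def abelTerm (n s : ℕ) : ℝ :=
  ((n - 1).choose s : ℝ) * ((n : ℝ) - s) ^ ((n : ℤ) - s - 2) * ((s : ℝ) + 1) ^ ((s : ℤ) - 1)

/-- `Q_{n,p}(j)`: the (conditional) probability that the last car prefers spot `j ∈ [n]`,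
given that all cars park, as established in Theorem 3:
`Q_{n,p}(j) = 2/(n+1) − (1/(n+1)^{n−1})[p·Σ_{s=n−j+1}^{n−1} C(n−1,s)(n−s)^{n−s−2}(s+1)^{s−1}`
`+ (1−p)·Σ_{s=0}^{n−j−1} C(n−1,s)(n−s)^{n−s−2}(s+1)^{s−1}]`. -/
noncomputable def Qform (n : ℕ) (p : ℝ) (j : ℕ) : ℝ :=
  2 / ((n : ℝ) + 1) - (1 / ((n : ℝ) + 1) ^ (n - 1)) *
    (p * ∑ s ∈ Finset.Icc (n - j + 1) (n - 1), abelTerm n s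
      + (1 - p) * ∑ s ∈ Finset.range (n - j), abelTerm n s)

/-- Total variation distance between two functions on `[n] = {1,...,n}`. -/
noncomputable def tvDist (n : ℕ) (P Q : ℕ → ℝ) : ℝ :=
  (1 / 2) * ∑ j ∈ Finset.Icc 1 n, |P j - Q j|

/-- The uniform distribution on `[n]`. -/
noncomputable def unifDist (n : ℕ) : ℕ → ℝ := fun _ => 1 / (n : ℝ)


lemma pascalAlt (m : ℕ) (f : ℕ → ℝ) :
    ∑ k ∈ range (m+2), (-1:ℝ)^k * ((m+1).choose k) * f k
      = ∑ k ∈ range (m+1), (-1:ℝ)^k * (m.choose k) * (f k - f (k+1)) := by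
  have h2 : ∑ k ∈ range (m+1), (-1:ℝ)^k * (m.choose k) * f k
      = (∑ k ∈ range (m+1), (-1:ℝ)^(k+1) * (m.choose (k+1)) * f (k+1)) + f 0 := by
    rw [Finset.sum_range_succ' (fun k => (-1:ℝ)^k * (m.choose k) * f k) m]
    rw [Finset.sum_range_succ (fun k => (-1:ℝ)^(k+1) * (m.choose (k+1)) * f (k+1)) m]
    simp [Nat.choose_succ_self]
  rw [Finset.sum_range_succ' (fun k => (-1:ℝ)^k * ((m+1).choose k) * f k) (m+1)]
  have : ∀ k ∈ range (m+1), (-1:ℝ)^(k+1) * (((m+1).choose (k+1) : ℕ) : ℝ) * f (k+1)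
      = (-1:ℝ)^(k+1) * (m.choose k) * f (k+1) + (-1:ℝ)^(k+1) * (m.choose (k+1)) * f (k+1) := by
    intro k _
    rw [Nat.choose_succ_succ']
    push_cast
    ring
  rw [Finset.sum_congr rfl this, Finset.sum_add_distrib]
  have h3 : ∑ k ∈ range (m+1), (-1:ℝ)^k * (m.choose k) * (f k - f (k+1))
      = (∑ k ∈ range (m+1), (-1:ℝ)^k * (m.choose k) * f k)
        - ∑ k ∈ range (m+1), (-1:ℝ)^k * (m.choose k) * f (k+1) := by
    rw [← Finset.sum_sub_distrib]; apply Finset.sum_congr rfl; intro k _; ring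
  rw [h3, h2]
  have h4 : ∑ k ∈ range (m+1), (-1:ℝ)^(k+1) * (m.choose k) * f (k+1)
      = - ∑ k ∈ range (m+1), (-1:ℝ)^k * (m.choose k) * f (k+1) := by
    rw [← Finset.sum_neg_distrib]; apply Finset.sum_congr rfl; intro k _; ring
  rw [h4]
  simp [Nat.choose_zero_right]
  ring

lemma altSumZero : ∀ d : ℕ, ∀ m : ℕ, d < m → ∀ c : ℝ,
    ∑ k ∈ range (m+1), (-1:ℝ)^k * (m.choose k) * (c + k)^d = 0 := by
  intro d
  induction d using Nat.strong_induction_on with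
  | _ d ih =>
    intro m hdm c
    obtain ⟨M, rfl⟩ : ∃ M, m = M + 1 := ⟨m - 1, by omega⟩
    rw [show M + 1 + 1 = M + 2 from rfl, pascalAlt M (fun k => (c + k)^d)]
    have key : ∀ k : ℕ, (c + (k:ℝ))^d - (c + ((k+1:ℕ):ℝ))^d
        = ∑ j ∈ range d, -((d.choose j : ℝ) * (c + k)^j) := by
      intro k
      have hb : (c + ((k+1:ℕ):ℝ))^d
          = (∑ j ∈ range d, (c + (k:ℝ))^j * 1^(d-j) * (d.choose j)) + (c + (k:ℝ))^d := by
        have : c + ((k+1:ℕ):ℝ) = (c + (k:ℝ)) + 1 := by push_cast; ring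
        rw [this, add_pow, Finset.sum_range_succ]
        simp
      rw [hb, Finset.sum_neg_distrib]
      rw [show ∑ j ∈ range d, ((d.choose j : ℝ) * (c + k)^j)
            = ∑ j ∈ range d, (c + (k:ℝ))^j * 1^(d-j) * (d.choose j) from
          Finset.sum_congr rfl (by intro j _; simp; ring)]
      ring
    have step : ∀ k ∈ range (M+1), (-1:ℝ)^k * (M.choose k) * ((c + (k:ℝ))^d - (c + ((k+1:ℕ):ℝ))^d)
        = ∑ j ∈ range d, -((d.choose j : ℝ) * ((-1:ℝ)^k * (M.choose k) * (c + k)^j)) := by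
      intro k _
      rw [key k, Finset.mul_sum]
      apply Finset.sum_congr rfl
      intro j _; ring
    rw [Finset.sum_congr rfl step, Finset.sum_comm]
    apply Finset.sum_eq_zero
    intro j hj
    have hj' : j < d := mem_range.mp hj
    have hz := ih j hj' M (by omega) c
    obtain ⟨M', rfl⟩ : ∃ M', M = M' + 1 := ⟨M - 1, by omega⟩
    rw [show ∑ k ∈ range (M' + 1 + 1), -((d.choose j : ℝ) * ((-1:ℝ)^k * ((M'+1).choose k) * (c + k)^j))
          = -((d.choose j : ℝ) * ∑ k ∈ range (M' + 1 + 1), ((-1:ℝ)^k * ((M'+1).choose k) * (c + k)^j)) from by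
        rw [Finset.mul_sum, Finset.sum_neg_distrib]]
    rw [hz]
    ring

lemma abelA : ∀ (m : ℕ) (y : ℝ),
    ∑ k ∈ range (m+1), (m.choose k : ℝ) * ((k:ℝ)+1)^(k-1) * (y + ((m-k:ℕ):ℝ))^(m-k)
      = (y + m + 1)^m := by
  intro m
  induction m with
  | zero => intro y; simp
  | succ m IH =>
    have hg : ∀ x : ℝ, HasDerivAt (fun y : ℝ =>
        (∑ k ∈ range (m+1+1), ((m+1).choose k : ℝ) * ((k:ℝ)+1)^(k-1) * (y + ((m+1-k:ℕ):ℝ))^(m+1-k))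
          - (y + ((m+1:ℕ):ℝ) + 1)^(m+1)) 0 x := by
      intro x
      have hterm : ∀ k ∈ range (m+1+1), HasDerivAt (fun y : ℝ =>
            ((m+1).choose k : ℝ) * ((k:ℝ)+1)^(k-1) * (y + ((m+1-k:ℕ):ℝ))^(m+1-k))
          (((m+1).choose k : ℝ) * ((k:ℝ)+1)^(k-1) *
            ((m+1-k : ℕ) * (x + ((m+1-k:ℕ):ℝ))^(m+1-k-1) * 1)) x := by
        intro k _
        exact (((hasDerivAt_id x).add_const _).pow _).const_mul _
      have hsum := HasDerivAt.fun_sum hterm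
      have hrhs : HasDerivAt (fun y : ℝ => (y + ((m+1:ℕ):ℝ) + 1)^(m+1))
          (((m+1:ℕ):ℝ) * (x + ((m+1:ℕ):ℝ) + 1)^m * 1) x := by
        have : HasDerivAt (fun y : ℝ => (y + (((m+1:ℕ):ℝ) + 1))^(m+1))
            (((m+1:ℕ):ℝ) * (x + (((m+1:ℕ):ℝ) + 1))^(m+1-1) * 1) x := by
          have h := (((hasDerivAt_id x).add_const (((m+1:ℕ):ℝ) + 1)).fun_pow (m+1))
          simpa using h
        simpa [add_assoc] using this
      have heq : (∑ k ∈ range (m+1+1), ((m+1).choose k : ℝ) * ((k:ℝ)+1)^(k-1) *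
            ((m+1-k : ℕ) * (x + ((m+1-k:ℕ):ℝ))^(m+1-k-1) * 1))
          = ((m+1:ℕ):ℝ) * (x + ((m+1:ℕ):ℝ) + 1)^m * 1 := by
        rw [Finset.sum_range_succ]
        simp only [Nat.sub_self]
        have hmain : ∀ k ∈ range (m+1), ((m+1).choose k : ℝ) * ((k:ℝ)+1)^(k-1) *
              ((m+1-k : ℕ) * (x + ((m+1-k:ℕ):ℝ))^(m+1-k-1) * 1)
            = ((m+1:ℕ):ℝ) * ((m.choose k : ℝ) * ((k:ℝ)+1)^(k-1) * ((x+1) + ((m-k:ℕ):ℝ))^(m-k)) := by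
          intro k hk
          have hk' : k ≤ m := by have := mem_range.mp hk; omega
          have h1 : (m+1-k : ℕ) = (m-k)+1 := by omega
          have h2 : (m+1-k-1 : ℕ) = m-k := by omega
          have h3 : ((m+1).choose k : ℝ) * ((m+1-k : ℕ) : ℝ) = ((m+1:ℕ):ℝ) * (m.choose k : ℝ) := by
            have := Nat.choose_mul_succ_eq m k
            have : (m.choose k) * (m+1) = (m+1).choose k * (m+1-k) := this
            exact_mod_cast by
              have := congrArg (fun t : ℕ => (t : ℝ)) this
              push_cast at this
              linarith
          have h4 : (x + ((m+1-k:ℕ):ℝ)) = (x+1) + ((m-k:ℕ):ℝ) := by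
            rw [h1]; push_cast; ring
          rw [h2, h4]
          linear_combination (((k:ℝ)+1)^(k-1) * ((x+1) + ((m-k:ℕ):ℝ))^(m-k)) * h3
        rw [Finset.sum_congr rfl hmain, ← Finset.mul_sum, IH (x+1)]
        push_cast
        ring
      have := hsum.fun_sub hrhs
      rw [heq] at this
      simpa using this
    intro y
    have hconst := is_const_of_deriv_eq_zero
      (f := fun y : ℝ =>
        (∑ k ∈ range (m+1+1), ((m+1).choose k : ℝ) * ((k:ℝ)+1)^(k-1) * (y + ((m+1-k:ℕ):ℝ))^(m+1-k))
          - (y + ((m+1:ℕ):ℝ) + 1)^(m+1))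
      (fun x => (hg x).differentiableAt)
      (fun x => (hg x).deriv)
      y (-(((m:ℝ)+2)))
    have hzero : (∑ k ∈ range (m+1+1), ((m+1).choose k : ℝ) * ((k:ℝ)+1)^(k-1) *
          ((-(((m:ℝ)+2))) + ((m+1-k:ℕ):ℝ))^(m+1-k))
        - ((-(((m:ℝ)+2))) + ((m+1:ℕ):ℝ) + 1)^(m+1) = 0 := by
      have hterm : ∀ k ∈ range (m+1+1), ((m+1).choose k : ℝ) * ((k:ℝ)+1)^(k-1) *
            ((-(((m:ℝ)+2))) + ((m+1-k:ℕ):ℝ))^(m+1-k)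
          = (-1:ℝ)^(m+1) * ((-1:ℝ)^k * ((m+1).choose k : ℝ) * ((1:ℝ) + k)^m) := by
        intro k hk
        have hk' : k ≤ m+1 := by have := mem_range.mp hk; omega
        have hb : (-(((m:ℝ)+2))) + ((m+1-k:ℕ):ℝ) = -(((k:ℝ)+1)) := by
          have : ((m+1-k:ℕ):ℝ) = ((m:ℝ)+1) - k := by
            have : (m+1-k : ℕ) + k = m+1 := by omega
            have := congrArg (fun t : ℕ => (t : ℝ)) this
            push_cast at this
            linarith
          rw [this]; ring
        rw [hb, neg_pow]
        have hpow : ((k:ℝ)+1)^(k-1) * ((k:ℝ)+1)^(m+1-k) = ((k:ℝ)+1)^m := by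
          rcases Nat.eq_zero_or_pos k with hk0 | hk0
          · subst hk0; simp
          · rw [← pow_add]; congr 1; omega
        have hsign : (-1:ℝ)^(m+1-k) = (-1:ℝ)^(m+1) * (-1:ℝ)^k := by
          have h1 : (-1:ℝ)^(m+1-k) * (-1:ℝ)^k = (-1:ℝ)^(m+1) := by
            rw [← pow_add]; congr 1; omega
          have h2 : ((-1:ℝ)^k) * ((-1:ℝ)^k) = 1 := by
            rw [← pow_add]; exact Even.neg_one_pow ⟨k, rfl⟩
          calc (-1:ℝ)^(m+1-k) = (-1:ℝ)^(m+1-k) * (((-1:ℝ)^k) * ((-1:ℝ)^k)) := by rw [h2, mul_one]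
            _ = ((-1:ℝ)^(m+1-k) * (-1:ℝ)^k) * (-1:ℝ)^k := by ring
            _ = (-1:ℝ)^(m+1) * (-1:ℝ)^k := by rw [h1]
        calc ((m+1).choose k : ℝ) * ((k:ℝ)+1)^(k-1) * ((-1:ℝ)^(m+1-k) * ((k:ℝ)+1)^(m+1-k))
            = (-1:ℝ)^(m+1-k) * ((m+1).choose k : ℝ) * (((k:ℝ)+1)^(k-1) * ((k:ℝ)+1)^(m+1-k)) := by ring
          _ = (-1:ℝ)^(m+1-k) * ((m+1).choose k : ℝ) * ((k:ℝ)+1)^m := by rw [hpow]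
          _ = (-1:ℝ)^(m+1) * ((-1:ℝ)^k * ((m+1).choose k : ℝ) * ((1:ℝ) + k)^m) := by
              rw [hsign]; ring_nf
      rw [Finset.sum_congr rfl hterm, ← Finset.mul_sum, altSumZero m (m+1) (by omega) 1]
      have : (-(((m:ℝ)+2))) + ((m+1:ℕ):ℝ) + 1 = 0 := by push_cast; ring
      rw [this]
      simp
    rw [hzero] at hconst
    have := sub_eq_zero.mp hconst
    convert this using 2

noncomputable def tTerm (m k : ℕ) : ℝ :=
  (m.choose k : ℝ) * ((k:ℝ)+1)^(k-1) * (((m-k:ℕ):ℝ)+1)^(m-k-1)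

lemma abelSumT (m : ℕ) (hm : 1 ≤ m) :
    ∑ k ∈ range (m+1), tTerm m k = 2 * ((m:ℝ)+2)^(m-1) := by
  have A1 := abelA m 1
  -- summand of A1 equals (↑(m-k)+1) * tTerm m k
  have h1 : ∀ k ∈ range (m+1), (m.choose k : ℝ) * ((k:ℝ)+1)^(k-1) * ((1:ℝ) + ((m-k:ℕ):ℝ))^(m-k)
      = (((m-k:ℕ):ℝ)+1) * tTerm m k := by
    intro k hk
    unfold tTerm
    rcases Nat.lt_or_ge k m with h | h
    · have : m - k = (m-k-1)+1 := by omega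
      rw [show ((1:ℝ) + ((m-k:ℕ):ℝ)) = (((m-k:ℕ):ℝ)+1) by ring, this, pow_succ]
      rw [show (m-k-1)+1-1 = m-k-1 by omega]
      ring
    · have hkm : k = m := by have := mem_range.mp hk; omega
      subst hkm
      simp
  have hU : ∑ k ∈ range (m+1), (m.choose k : ℝ) * ((k:ℝ)+1)^k * (((m-k:ℕ):ℝ)+1)^(m-k-1)
      = ((m:ℝ)+2)^m := by
    rw [← Finset.sum_range_reflect]
    have hcg : ∀ j ∈ range (m+1),
        (m.choose (m+1-1-j) : ℝ) * (((m+1-1-j:ℕ):ℝ)+1)^(m+1-1-j) * (((m-(m+1-1-j):ℕ):ℝ)+1)^(m-(m+1-1-j)-1)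
        = (m.choose j : ℝ) * ((j:ℝ)+1)^(j-1) * ((1:ℝ) + ((m-j:ℕ):ℝ))^(m-j) := by
      intro j hj
      have hj' : j ≤ m := by have := mem_range.mp hj; omega
      rw [show m+1-1-j = m-j from by omega, show m-(m-j) = j from by omega,
        Nat.choose_symm hj']
      ring
    rw [Finset.sum_congr rfl hcg, abelA m 1]
    ring
  -- main computation
  have h2 : ∀ k ∈ range (m+1), (((m-k:ℕ):ℝ)+1) * tTerm m k
      = ((m:ℝ)+2) * tTerm m k - (m.choose k : ℝ) * ((k:ℝ)+1)^k * (((m-k:ℕ):ℝ)+1)^(m-k-1) := by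
    intro k hk
    have hk' : k ≤ m := by have := mem_range.mp hk; omega
    have hcast : ((m-k:ℕ):ℝ) = (m:ℝ) - k := by
      have : ((m-k:ℕ):ℝ) + (k:ℝ) = (m:ℝ) := by exact_mod_cast congrArg (fun t:ℕ => (t:ℝ)) (by omega : (m-k)+k = m)
      linarith
    have hpow : ((k:ℝ)+1) * ((k:ℝ)+1)^(k-1) = ((k:ℝ)+1)^k := by
      rcases Nat.eq_zero_or_pos k with h0 | h0
      · subst h0; simp
      · rw [show k = (k-1)+1 from by omega, pow_succ, show (k-1)+1-1 = k-1 from by omega]; ring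
    unfold tTerm
    rw [hcast]
    linear_combination (-(m.choose k : ℝ) * (((m:ℝ)-(k:ℝ)+1)^(m-k-1))) * hpow
  rw [Finset.sum_congr rfl h1, Finset.sum_congr rfl h2, Finset.sum_sub_distrib,
    ← Finset.mul_sum, hU] at A1
  have hexp : ((m:ℝ)+2)^m = ((m:ℝ)+2) * ((m:ℝ)+2)^(m-1) := by
    rw [show m = (m-1)+1 from by omega, pow_succ, show (m-1)+1-1 = m-1 from by omega]; ring
  have hne : ((m:ℝ)+2) ≠ 0 := by positivity
  have : (1:ℝ) + m + 1 = (m:ℝ) + 2 := by ring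
  rw [this, hexp] at A1
  have hS : ((m:ℝ)+2) * (∑ k ∈ range (m+1), tTerm m k) = ((m:ℝ)+2) * (2*((m:ℝ)+2)^(m-1)) := by
    linarith
  exact mul_left_cancel₀ hne hS


lemma abelTerm_eq_tTerm (n s : ℕ) (hn : 1 ≤ n) (hs : s ≤ n-1) :
    abelTerm n s = tTerm (n-1) s := by
  unfold abelTerm tTerm
  have hc : ((n:ℝ) - s) = ((n-1-s : ℕ):ℝ) + 1 := by
    have : ((n-1-s:ℕ):ℝ) + (s:ℝ) + 1 = (n:ℝ) := by
      exact_mod_cast congrArg (fun t:ℕ => (t:ℝ)) (by omega : (n-1-s) + s + 1 = n)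
    linarith
  have h2 : ((n:ℝ) - s)^((n:ℤ)-s-2) = (((n-1-s:ℕ):ℝ)+1)^(n-1-s-1) := by
    rcases Nat.lt_or_ge s (n-1) with h | h
    · rw [show (n:ℤ)-s-2 = ((n-2-s : ℕ) : ℤ) from by omega, zpow_natCast, hc,
        show n-1-s-1 = n-2-s from by omega]
    · have hs' : s = n-1 := by omega
      subst hs'
      have hb : ((n:ℝ) - ((n-1:ℕ):ℝ)) = 1 := by
        rw [hc, show n-1-(n-1) = 0 from by omega]; simp
      rw [hb, one_zpow, show n-1-(n-1) = 0 from by omega]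
      simp
  have h3 : ((s:ℝ)+1)^((s:ℤ)-1) = ((s:ℝ)+1)^(s-1) := by
    rcases Nat.eq_zero_or_pos s with h0 | h0
    · subst h0; simp
    · rw [show (s:ℤ)-1 = ((s-1:ℕ):ℤ) from by omega, zpow_natCast]
  rw [h2, h3]
  ring

lemma abelTerm_nonneg (n s : ℕ) (hn : 1 ≤ n) (hs : s ≤ n-1) : 0 ≤ abelTerm n s := by
  rw [abelTerm_eq_tTerm n s hn hs]
  unfold tTerm
  positivity

lemma sumAbel (n : ℕ) (hn : 2 ≤ n) :
    ∑ s ∈ range n, abelTerm n s = 2 * ((n:ℝ)+1)^(n-2) := by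
  have h := abelSumT (n-1) (by omega)
  rw [show (n-1)+1 = n from by omega] at h
  rw [show ∑ s ∈ range n, abelTerm n s = ∑ s ∈ range n, tTerm (n-1) s from
    Finset.sum_congr rfl fun s hs =>
      abelTerm_eq_tTerm n s (by omega) (by have := mem_range.mp hs; omega)]
  rw [h, show (n-1)-1 = n-2 from by omega]
  have : ((n-1:ℕ):ℝ) = (n:ℝ) - 1 := by
    rw [Nat.cast_sub (by omega)]; simp
  rw [this, show (n:ℝ)-1+2 = (n:ℝ)+1 from by ring]

lemma abelTerm_zero (n : ℕ) (hn : 2 ≤ n) : abelTerm n 0 = (n:ℝ)^(n-2) := by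
  unfold abelTerm
  simp only [Nat.cast_zero, sub_zero, Nat.choose_zero_right, Nat.cast_one, one_mul,
    zero_add, one_zpow, mul_one]
  rw [show (n:ℤ) - 2 = ((n-2:ℕ):ℤ) from by omega, zpow_natCast]

-- the sum split
lemma sumSplit (n j : ℕ) (f : ℕ → ℝ) (hj1 : 1 ≤ j) (hjn : j ≤ n) :
    (∑ s ∈ Finset.Icc (n-j+1) (n-1), f s) + (∑ s ∈ Finset.range (n-j), f s)
      = (∑ s ∈ range n, f s) - f (n-j) := by
  have h1 : Finset.Icc (n-j+1) (n-1) = Finset.Ico (n-j+1) n := by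
    rw [← Finset.Ico_add_one_right_eq_Icc]
    congr 1
    omega
  have h2 : (∑ s ∈ Finset.range (n-j), f s) = ∑ s ∈ Finset.Ico 0 (n-j), f s := by
    rw [Finset.range_eq_Ico]
  have h3 : (∑ s ∈ Finset.Ico (n-j) n, f s) = f (n-j) + ∑ s ∈ Finset.Ico (n-j+1) n, f s := by
    exact Finset.sum_eq_sum_Ico_succ_bot (by omega) f
  have h4 : (∑ s ∈ Finset.Ico 0 (n-j), f s) + ∑ s ∈ Finset.Ico (n-j) n, f s
      = ∑ s ∈ Finset.Ico 0 n, f s := by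
    exact Finset.sum_Ico_consecutive f (by omega) (by omega)
  rw [h1, h2, ← Finset.range_eq_Ico] at *
  rw [← Finset.range_eq_Ico] at h4
  rw [← h4, h3]
  ring


lemma Qval (n : ℕ) (hn : 2 ≤ n) (j : ℕ) (hj1 : 1 ≤ j) (hjn : j ≤ n) :
    Qform n (1/2) j = 1/((n:ℝ)+1) + abelTerm n (n-j) / (2*((n:ℝ)+1)^(n-1)) := by
  unfold Qform
  have hsplit := sumSplit n j (abelTerm n) hj1 hjn
  rw [sumAbel n hn] at hsplit
  set S1 := ∑ s ∈ Finset.Icc (n-j+1) (n-1), abelTerm n s with hS1def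
  set S2 := ∑ s ∈ Finset.range (n-j), abelTerm n s with hS2def
  set a := abelTerm n (n-j) with hadef
  have hS1 : S1 = 2*((n:ℝ)+1)^(n-2) - a - S2 := by linarith
  rw [hS1]
  have hpow : ((n:ℝ)+1)^(n-1) = ((n:ℝ)+1)^(n-2) * ((n:ℝ)+1) := by
    rw [show n-1 = (n-2)+1 from by omega, pow_succ]
  have hne : ((n:ℝ)+1) ≠ 0 := by positivity
  have hne2 : ((n:ℝ)+1)^(n-2) ≠ 0 := by positivity
  rw [hpow]
  field_simp
  ring

lemma sumReindex (n : ℕ) (hn : 1 ≤ n) (f : ℕ → ℝ) :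
    ∑ j ∈ Finset.Icc 1 n, f (n-j) = ∑ s ∈ range n, f s := by
  apply Finset.sum_nbij' (i := fun j => n - j) (j := fun s => n - s)
  · intro a ha
    simp only [Finset.mem_Icc] at ha
    simp only [Finset.mem_range]
    omega
  · intro a ha
    simp only [Finset.mem_range] at ha
    simp only [Finset.mem_Icc]
    omega
  · intro a ha
    simp only [Finset.mem_Icc] at ha
    omega
  · intro a ha
    simp only [Finset.mem_range] at ha
    omega
  · intro a _
    rfl



/-- **Theorem 5 (`p = 1/2` is special).** The total variation distance between
`Q_{n,1/2}` and the uniform distribution on `[n]` is at most `1/(n+1)` and at least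
`n^{n−2}/(4(n+1)^{n−1}) − 1/(n(n+1))`; in particular it is `Θ(1/n)`. -/
theorem tv_half_bounds (n : ℕ) (hn : 1 ≤ n) :
    tvDist n (Qform n (1 / 2)) (unifDist n) ≤ 1 / ((n : ℝ) + 1) ∧
      (n : ℝ) ^ (n - 2) / (4 * ((n : ℝ) + 1) ^ (n - 1)) - 1 / ((n : ℝ) * ((n : ℝ) + 1))
        ≤ tvDist n (Qform n (1 / 2)) (unifDist n) := by
  rcases eq_or_lt_of_le hn with h1 | h2
  · -- n = 1
    subst h1
    unfold tvDist Qform unifDist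
    norm_num
  · -- n ≥ 2
    have hn2 : 2 ≤ n := h2
    have hnpos : (0:ℝ) < n := by positivity
    have hn1pos : (0:ℝ) < (n:ℝ) + 1 := by positivity
    have hPpos : (0:ℝ) < ((n:ℝ)+1)^(n-1) := by positivity
    have hP2pos : (0:ℝ) < ((n:ℝ)+1)^(n-2) := by positivity
    have hpow : ((n:ℝ)+1)^(n-1) = ((n:ℝ)+1)^(n-2) * ((n:ℝ)+1) := by
      rw [show n-1 = (n-2)+1 from by omega, pow_succ]
    -- formula for the difference
    have hdiff : ∀ j ∈ Finset.Icc 1 n, Qform n (1/2) j - unifDist n j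
        = abelTerm n (n-j) / (2*((n:ℝ)+1)^(n-1)) - 1/((n:ℝ)*((n:ℝ)+1)) := by
      intro j hj
      simp only [Finset.mem_Icc] at hj
      rw [Qval n hn2 j hj.1 hj.2]
      unfold unifDist
      have : 1/((n:ℝ)+1) - 1/(n:ℝ) = -(1/((n:ℝ)*((n:ℝ)+1))) := by
        field_simp; ring
      linarith [this]
    have hnonneg : ∀ j ∈ Finset.Icc 1 n, 0 ≤ abelTerm n (n-j) := by
      intro j hj
      simp only [Finset.mem_Icc] at hj
      exact abelTerm_nonneg n (n-j) hn (by omega)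
    constructor
    · -- upper bound
      unfold tvDist
      have hb : ∀ j ∈ Finset.Icc 1 n, |Qform n (1/2) j - unifDist n j|
          ≤ abelTerm n (n-j) / (2*((n:ℝ)+1)^(n-1)) + 1/((n:ℝ)*((n:ℝ)+1)) := by
        intro j hj
        rw [hdiff j hj]
        have h1 : 0 ≤ abelTerm n (n-j) / (2*((n:ℝ)+1)^(n-1)) := by
          have := hnonneg j hj; positivity
        have h2 : 0 ≤ 1/((n:ℝ)*((n:ℝ)+1)) := by positivity
        rw [abs_sub_comm]
        calc |1/((n:ℝ)*((n:ℝ)+1)) - abelTerm n (n-j) / (2*((n:ℝ)+1)^(n-1))|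
            ≤ |1/((n:ℝ)*((n:ℝ)+1))| + |abelTerm n (n-j) / (2*((n:ℝ)+1)^(n-1))| := abs_sub _ _
          _ = abelTerm n (n-j) / (2*((n:ℝ)+1)^(n-1)) + 1/((n:ℝ)*((n:ℝ)+1)) := by
              rw [abs_of_nonneg h1, abs_of_nonneg h2]; ring
      have hsumle := Finset.sum_le_sum hb
      have hsum2 : ∑ j ∈ Finset.Icc 1 n, (abelTerm n (n-j) / (2*((n:ℝ)+1)^(n-1)) + 1/((n:ℝ)*((n:ℝ)+1)))
          = 2/((n:ℝ)+1) := by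
        rw [Finset.sum_add_distrib]
        have e1 : ∑ j ∈ Finset.Icc 1 n, abelTerm n (n-j) / (2*((n:ℝ)+1)^(n-1))
            = (∑ j ∈ Finset.Icc 1 n, abelTerm n (n-j)) / (2*((n:ℝ)+1)^(n-1)) := by
          rw [Finset.sum_div]
        rw [e1, sumReindex n hn (abelTerm n), sumAbel n hn2]
        rw [Finset.sum_const, Nat.card_Icc]
        simp only [nsmul_eq_mul]
        rw [hpow]
        have : ((n + 1 - 1 : ℕ) : ℝ) = (n:ℝ) := by norm_num
        rw [this]
        field_simp
        ring
      rw [hsum2] at hsumle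
      calc (1/2) * ∑ j ∈ Finset.Icc 1 n, |Qform n (1/2) j - unifDist n j|
          ≤ (1/2) * (2/((n:ℝ)+1)) := by linarith
        _ = 1/((n:ℝ)+1) := by ring
    · -- lower bound
      unfold tvDist
      have hmem : n ∈ Finset.Icc 1 n := by simp [Finset.mem_Icc]; omega
      have hsingle : |Qform n (1/2) n - unifDist n n|
          ≤ ∑ j ∈ Finset.Icc 1 n, |Qform n (1/2) j - unifDist n j| :=
        Finset.single_le_sum (f := fun j => |Qform n (1/2) j - unifDist n j|) (fun j _ => abs_nonneg _) hmem
      have hval : Qform n (1/2) n - unifDist n n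
          = (n:ℝ)^(n-2) / (2*((n:ℝ)+1)^(n-1)) - 1/((n:ℝ)*((n:ℝ)+1)) := by
        rw [hdiff n hmem, show n - n = 0 from by omega, abelTerm_zero n hn2]
      have habs : (n:ℝ)^(n-2) / (2*((n:ℝ)+1)^(n-1)) - 1/((n:ℝ)*((n:ℝ)+1))
          ≤ |Qform n (1/2) n - unifDist n n| := by
        rw [hval]; exact le_abs_self _
      have hd : 0 ≤ 1/((n:ℝ)*((n:ℝ)+1)) := by positivity
      have : (n:ℝ)^(n-2) / (4*((n:ℝ)+1)^(n-1)) = (1/2) * ((n:ℝ)^(n-2) / (2*((n:ℝ)+1)^(n-1))) := by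
        ring
      linarith
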